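/- Let K be a regular incidence complex of rank n ≥ 4 realized faithfully in E^3 with flag-transitive symmetry group G ≤ Isom(E^3), base flag {F₀,...,F_{n-1}}, and distinguished subgroups R_i. If the affine span of the vertex set of the 2-face F₂ is 3-dimensional (F₂ is non-planar), then R₃ = ... = R_{n-1} = R₋₁ are all equal to the flag stabilizer, contradicting that each |R_i : R₋₁| ≥ 2; hence F₂ must be planar. -/

import Mathlib

universe u

variable {α : Type u}

/-- A ranked partial order `(α, ≤)` with rank function `rk` is an incidence complex of
rank `n`: ranks run from `-1` to `n` and are strictly monotone, there are unique minimal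
and maximal faces, every flag (maximal chain) contains a face of each rank `-1,…,n` (hence
has exactly `n+2` faces), the complex is strongly flag-connected, and between any two
incident faces of ranks `j-1` and `j+1` there are at least two faces of rank `j`. -/
structure IsIncidenceComplex (n : ℕ) [PartialOrder α] (rk : α → ℤ) : Prop where
  rk_strictMono : ∀ {F G : α}, F < G → rk F < rk G
  rk_range : ∀ F : α, -1 ≤ rk F ∧ rk F ≤ n
  exists_bot : ∃ B : α, rk B = -1 ∧ ∀ F : α, B ≤ F
  exists_top : ∃ T : α, rk T = n ∧ ∀ F : α, F ≤ T
  flag_rk : ∀ Φ : Set α, IsMaxChain (· ≤ ·) Φ → ∀ j : ℤ, -1 ≤ j → j ≤ n →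
    ∃ F ∈ Φ, rk F = j
  strongly_connected : ∀ Φ Ψ : Set α, IsMaxChain (· ≤ ·) Φ → IsMaxChain (· ≤ ·) Ψ →
    Relation.ReflTransGen
      (fun A B => IsMaxChain (· ≤ ·) A ∧ IsMaxChain (· ≤ ·) B ∧ Φ ∩ Ψ ⊆ A ∧ Φ ∩ Ψ ⊆ B ∧
        ∃ F G, F ∈ A ∧ G ∈ B ∧ F ≠ G ∧ A \ {F} = B \ {G}) Φ Ψ
  diamond_ge_two : ∀ F G : α, F < G → rk G = rk F + 2 →
    ∃ H₁ H₂ : α, H₁ ≠ H₂ ∧ F < H₁ ∧ H₁ < G ∧ F < H₂ ∧ H₂ < G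

/-- Two flags are `i`-adjacent when they differ in exactly one face, of rank `i`. -/
def IAdjacent [PartialOrder α] (rk : α → ℤ) (i : ℤ) (Φ Ψ : Set α) : Prop :=
  ∃ F G, F ∈ Φ ∧ G ∈ Ψ ∧ F ≠ G ∧ rk F = i ∧ rk G = i ∧ Φ \ {F} = Ψ \ {G}

/-- The group of order automorphisms of `α`, as a subgroup of the permutations of `α`. -/
def orderAutGroup (α : Type u) [PartialOrder α] : Subgroup (Equiv.Perm α) where
  carrier := {φ | ∀ a b : α, φ a ≤ φ b ↔ a ≤ b}
  one_mem' := fun _ _ => Iff.rfl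
  mul_mem' := by
    intro f g hf hg a b
    rw [Equiv.Perm.mul_apply, Equiv.Perm.mul_apply]
    exact (hf (g a) (g b)).trans (hg a b)
  inv_mem' := by
    intro f hf a b
    conv_rhs => rw [← Equiv.apply_symm_apply f a, ← Equiv.apply_symm_apply f b]
    exact (hf _ _).symm

/-- `Λ` is a flag-transitive group of automorphisms. -/
def FlagTransitive [PartialOrder α] (Λ : Subgroup (Equiv.Perm α)) : Prop :=
  ∀ Φ Ψ : Set α, IsMaxChain (· ≤ ·) Φ → IsMaxChain (· ≤ ·) Ψ → ∃ γ ∈ Λ, γ '' Φ = Ψ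

/-- The elementwise stabilizer in `Λ` of a set `Ω` of faces. -/
def stabOf [PartialOrder α] (Λ : Subgroup (Equiv.Perm α)) (Ω : Set α) :
    Subgroup (Equiv.Perm α) where
  carrier := {γ | γ ∈ Λ ∧ ∀ x ∈ Ω, γ x = x}
  one_mem' := ⟨Λ.one_mem, fun _ _ => rfl⟩
  mul_mem' := by
    intro f g hf hg
    refine ⟨Λ.mul_mem hf.1 hg.1, fun x hx => ?_⟩
    rw [Equiv.Perm.mul_apply, hg.2 x hx, hf.2 x hx]
  inv_mem' := by
    intro f hf
    refine ⟨Λ.inv_mem hf.1, fun x hx => ?_⟩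
    simpa using (congrArg (⇑f⁻¹) (hf.2 x hx)).symm

/-- The distinguished subgroup `R_i` of `Λ` relative to a base flag enumerated by
`F : Fin n → α`: the elements of `Λ` fixing every base face `F j` with `j ≠ i`.  For
`i ∉ {0,…,n-1}` (e.g. `i = -1` or `i = n`) this is the stabilizer of the base flag. -/
def distinguishedSubgroup [PartialOrder α] {n : ℕ} (Λ : Subgroup (Equiv.Perm α))
    (F : Fin n → α) (i : ℤ) : Subgroup (Equiv.Perm α) :=
  stabOf Λ {x | ∃ j : Fin n, (j : ℤ) ≠ i ∧ x = F j}

abbrev E3 := EuclideanSpace ℝ (Fin 3)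

section ICaux
variable [PartialOrder α] {n : ℕ} {rk : α → ℤ}

theorem chain_rk_inj (hmono : ∀ {F G : α}, F < G → rk F < rk G)
    {C : Set α} (hC : IsChain (· ≤ ·) C) {x y : α}
    (hx : x ∈ C) (hy : y ∈ C) (hr : rk x = rk y) : x = y := by
  by_contra hne
  rcases hC hx hy hne with hle | hle
  · exact absurd (hmono (lt_of_le_of_ne hle hne)) (by omega)
  · exact absurd (hmono (lt_of_le_of_ne hle (Ne.symm hne))) (by omega)

theorem chain_lt (hmono : ∀ {F G : α}, F < G → rk F < rk G)
    {C : Set α} (hC : IsChain (· ≤ ·) C) {x y : α}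
    (hx : x ∈ C) (hy : y ∈ C) (hr : rk x < rk y) : x < y := by
  have hne : x ≠ y := fun e => by subst e; omega
  rcases hC hx hy hne with hle | hle
  · exact lt_of_le_of_ne hle hne
  · exact absurd (hmono (lt_of_le_of_ne hle (Ne.symm hne))) (by omega)

theorem IC.exists_between (h : IsIncidenceComplex n rk) {x y : α}
    (hxy : x < y) (hr : rk x + 1 < rk y) : ∃ z, x < z ∧ z < y ∧ rk z = rk x + 1 := by
  have hchain : IsChain (· ≤ ·) {x, y} := by
    intro a ha b hb hab
    rcases ha with rfl | ha <;> rcases hb with rfl | hb <;>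
      simp_all <;> first | exact Or.inl hxy.le | exact Or.inr hxy.le
  obtain ⟨C, hC, hsub⟩ := hchain.exists_maxChain
  obtain ⟨z, hzC, hzr⟩ := h.flag_rk C hC (rk x + 1)
    (by have := (h.rk_range x).1; omega) (by have := (h.rk_range y).2; omega)
  exact ⟨z, chain_lt h.rk_strictMono hC.isChain (hsub (by simp)) hzC (by omega),
    chain_lt h.rk_strictMono hC.isChain hzC (hsub (by simp)) (by omega), hzr⟩

theorem maxChain_image (φ : Equiv.Perm α) (hφ : ∀ a b : α, φ a ≤ φ b ↔ a ≤ b)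
    {C : Set α} (hC : IsMaxChain (· ≤ ·) C) : IsMaxChain (· ≤ ·) (φ '' C) :=
  hC.image (⟨φ, hφ _ _⟩ : ((· ≤ ·) : α → α → Prop) ≃r ((· ≤ ·) : α → α → Prop))

theorem orderAut_bot (φ : Equiv.Perm α) (hφ : ∀ a b : α, φ a ≤ φ b ↔ a ≤ b)
    {B : α} (hB : ∀ F : α, B ≤ F) : φ B = B := by
  refine le_antisymm ?_ (hB _)
  have := (hφ B (φ.symm B)).mpr (hB _)
  rwa [Equiv.apply_symm_apply] at this

theorem orderAut_lt (φ : Equiv.Perm α) (hφ : ∀ a b : α, φ a ≤ φ b ↔ a ≤ b)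
    (a b : α) : φ a < φ b ↔ a < b := by
  simp only [lt_iff_le_not_ge, hφ]

theorem orderAut_rk (h : IsIncidenceComplex n rk) (φ : Equiv.Perm α)
    (hφ : ∀ a b : α, φ a ≤ φ b ↔ a ≤ b) (x : α) : rk (φ x) = rk x := by
  obtain ⟨B, hBr, hBle⟩ := h.exists_bot
  have hφB : φ B = B := orderAut_bot φ hφ hBle
  suffices key : ∀ k : ℕ, ∀ x : α, rk x + 1 = k → rk (φ x) = rk x by
    exact key (rk x + 1).toNat x (by have := (h.rk_range x).1; omega)
  intro k
  induction k with
  | zero =>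
    intro x hx
    have hxB : x = B := by
      rcases (hBle x).lt_or_eq with hlt | he
      · exact absurd (h.rk_strictMono hlt) (by omega)
      · exact he.symm
    subst hxB; rw [hφB]
  | succ k ih =>
    intro x hx
    have hchain : IsChain (· ≤ ·) ({x} : Set α) := Set.subsingleton_singleton.isChain
    obtain ⟨C, hC, hsub⟩ := hchain.exists_maxChain
    have hxC : x ∈ C := hsub rfl
    obtain ⟨w, hwC, hwr⟩ := h.flag_rk C hC (rk x - 1)
      (by have := (h.rk_range x).1; omega) (by have := (h.rk_range x).2; omega)
    have hwx : w < x := chain_lt h.rk_strictMono hC.isChain hwC hxC (by omega)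
    have hw' : rk (φ w) = rk w := ih w (by omega)
    have h1 : φ w < φ x := (orderAut_lt φ hφ w x).mpr hwx
    have h2 : rk (φ w) < rk (φ x) := h.rk_strictMono h1
    by_contra hne
    have h3 : rk (φ w) + 1 < rk (φ x) := by omega
    obtain ⟨z, hz1, hz2, _⟩ := IC.exists_between h h1 h3
    have hsym : ∀ a b : α, a < b → φ.symm a < φ.symm b := by
      intro a b hab
      have := (orderAut_lt φ hφ (φ.symm a) (φ.symm b))
      rw [Equiv.apply_symm_apply, Equiv.apply_symm_apply] at this
      exact this.mp hab
    have hz1' : w < φ.symm z := by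
      have := hsym _ _ hz1; rwa [Equiv.symm_apply_apply] at this
    have hz2' : φ.symm z < x := by
      have := hsym _ _ hz2; rwa [Equiv.symm_apply_apply] at this
    have := h.rk_strictMono hz1'
    have := h.rk_strictMono hz2'
    omega

theorem bot_mem_maxChain {B : α} (hB : ∀ F : α, B ≤ F) {C : Set α}
    (hC : IsMaxChain (· ≤ ·) C) : B ∈ C := by
  have hch : IsChain (· ≤ ·) (insert B C) :=
    hC.isChain.insert (fun b _ _ => Or.inl (hB b))
  have := hC.2 hch (Set.subset_insert _ _)
  rw [this]; exact Set.mem_insert _ _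

theorem maxChain_of_ranks (h : IsIncidenceComplex n rk) {C : Set α}
    (hc : IsChain (· ≤ ·) C) (hall : ∀ j : ℤ, -1 ≤ j → j ≤ n → ∃ x ∈ C, rk x = j) :
    IsMaxChain (· ≤ ·) C := by
  refine ⟨hc, fun t ht hsub => Set.Subset.antisymm hsub fun z hz => ?_⟩
  obtain ⟨y, hyC, hyr⟩ := hall (rk z) (h.rk_range z).1 (h.rk_range z).2
  have : z = y := chain_rk_inj h.rk_strictMono ht hz (hsub hyC) hyr.symm
  exact this ▸ hyC
end ICaux


theorem affineMap_fix_of_span_top (f : E3 →ᵃ[ℝ] E3) {s : Set E3}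
    (hs : ∀ p ∈ s, f p = p) (htop : affineSpan ℝ s = ⊤) (x : E3) : f x = x := by
  let Q : AffineSubspace ℝ E3 :=
    { carrier := {p | f p = p}
      smul_vsub_vadd_mem' := by
        intro c p₁ p₂ p₃ h1 h2 h3
        simp only [Set.mem_setOf_eq] at h1 h2 h3 ⊢
        rw [AffineMap.map_vadd, LinearMap.map_smul, AffineMap.linearMap_vsub, h1, h2, h3] }
  have hle : affineSpan ℝ s ≤ Q := affineSpan_le.mpr hs
  rw [htop] at hle
  exact hle (AffineSubspace.mem_top ℝ _ x)

/-- Let `K` be an incidence complex of rank `n ≥ 4` that is a polygonal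
complex (each edge has exactly two vertices and the diamond condition holds at rank 1, so
all 2-faces are polygons; faces are determined by their vertex sets), realized faithfully
in `E³` via a vertex map `β`, with a flag-transitive group `G` of isometries of `E³`
acting by automorphisms.  If the 2-face `F₂` of the base flag were non-planar—its vertex
set affinely spanning all of `E³`—then every `R i` for `i ≥ 3` would collapse to the flag
stabilizer `R (-1)`, contradicting `|R i : R (-1)| ≥ 2`.  Hence the affine span of the
vertex set of `F₂` is not all of `E³`: the base 2-face is planar. -/
theorem base_two_face_planar_of_regular_realization
    {α : Type u} [PartialOrder α] {n : ℕ} (hn : 4 ≤ n) (rk : α → ℤ)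
    (h : IsIncidenceComplex n rk)
    (hpoly0 : ∀ F G : α, F < G → rk F = -1 → rk G = 1 →
      ∃ H₁ H₂ : α, H₁ ≠ H₂ ∧ ∀ H : α, (F < H ∧ H < G) ↔ (H = H₁ ∨ H = H₂))
    (hpoly1 : ∀ F G : α, F < G → rk F = 0 → rk G = 2 →
      ∃ H₁ H₂ : α, H₁ ≠ H₂ ∧ ∀ H : α, (F < H ∧ H < G) ↔ (H = H₁ ∨ H = H₂))
    (hvx : ∀ F G : α, rk F = rk G →
      {v : α | rk v = 0 ∧ v ≤ F} = {v : α | rk v = 0 ∧ v ≤ G} → F = G)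
    (β : α → E3) (hβ : ∀ v w : α, rk v = 0 → rk w = 0 → β v = β w → v = w)
    (G : Subgroup (E3 ≃ᵢ E3)) (π : G →* Equiv.Perm α)
    (hπaut : ∀ g : G, π g ∈ orderAutGroup α)
    (hcompat : ∀ (g : G) (v : α), rk v = 0 → β (π g v) = (g : E3 ≃ᵢ E3) (β v))
    (htrans : ∀ Φ Ψ : Set α, IsMaxChain (· ≤ ·) Φ → IsMaxChain (· ≤ ·) Ψ →
      ∃ g : G, (π g) '' Φ = Ψ)
    (Φ : Set α) (hΦ : IsMaxChain (· ≤ ·) Φ)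
    (F : Fin n → α) (hF : ∀ i : Fin n, F i ∈ Φ ∧ rk (F i) = (i : ℤ)) :
    affineSpan ℝ (β '' {v : α | rk v = 0 ∧ v ≤ F ⟨2, by omega⟩}) ≠ ⊤ := by
  intro htop
  have hn4 : (4 : ℤ) ≤ (n : ℤ) := by exact_mod_cast hn
  obtain ⟨B, hBr, hBle⟩ := h.exists_bot
  have hΦc : IsChain (· ≤ ·) Φ := hΦ.isChain
  set F2 : α := F ⟨2, by omega⟩ with hF2def
  set F3 : α := F ⟨3, by omega⟩ with hF3def
  have htop' : affineSpan ℝ (β '' {v : α | rk v = 0 ∧ v ≤ F2}) = ⊤ := htop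
  have hF2Φ : F2 ∈ Φ := (hF ⟨2, by omega⟩).1
  have hF3Φ : F3 ∈ Φ := (hF ⟨3, by omega⟩).1
  have hF2r : rk F2 = 2 := by simpa using (hF ⟨2, by omega⟩).2
  have hF3r : rk F3 = 3 := by simpa using (hF ⟨3, by omega⟩).2
  obtain ⟨G4, hG4Φ, hG4r⟩ := h.flag_rk Φ hΦ 4 (by omega) (by omega)
  have hF2G4 : F2 < G4 := chain_lt h.rk_strictMono hΦc hF2Φ hG4Φ (by omega)
  obtain ⟨H₁, H₂, hH12, hlt11, hlt12, hlt21, hlt22⟩ :=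
    h.diamond_ge_two F2 G4 hF2G4 (by omega)
  obtain ⟨H, hF2H, hHG4, hHne3⟩ : ∃ H : α, F2 < H ∧ H < G4 ∧ H ≠ F3 := by
    rcases eq_or_ne H₁ F3 with rfl | hne
    · exact ⟨H₂, hlt21, hlt22, Ne.symm hH12⟩
    · exact ⟨H₁, hlt11, hlt12, hne⟩
  have hHr : rk H = 3 := by
    have := h.rk_strictMono hF2H
    have := h.rk_strictMono hHG4
    omega
  have hle_rk : ∀ {x y : α}, x ∈ Φ → y ∈ Φ → rk x ≤ rk y → x ≤ y := by
    intro x y hx hy hr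
    rcases lt_or_eq_of_le hr with h' | h'
    · exact (chain_lt h.rk_strictMono hΦc hx hy h').le
    · exact (chain_rk_inj h.rk_strictMono hΦc hx hy h').le
  set Ψ₀ : Set α := insert H (Φ \ {F3}) with hΨ₀def
  have hΨ₀c : IsChain (· ≤ ·) Ψ₀ := by
    refine (hΦc.mono Set.diff_subset).insert ?_
    rintro b ⟨hbΦ, hbne⟩ _
    have hb3 : rk b ≠ 3 := by
      intro e
      exact hbne (chain_rk_inj h.rk_strictMono hΦc hbΦ hF3Φ (by omega))
    by_cases hble : rk b ≤ 2
    · exact Or.inr (le_trans (hle_rk hbΦ hF2Φ (by omega)) hF2H.le)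
    · exact Or.inl (le_trans hHG4.le (hle_rk hG4Φ hbΦ (by omega)))
  have hΨ₀all : ∀ j : ℤ, -1 ≤ j → j ≤ n → ∃ x ∈ Ψ₀, rk x = j := by
    intro j h1 h2
    by_cases hj : j = 3
    · exact ⟨H, Set.mem_insert _ _, by rw [hHr, hj]⟩
    · obtain ⟨x, hxΦ, hxr⟩ := h.flag_rk Φ hΦ j h1 h2
      exact ⟨x, Or.inr ⟨hxΦ, fun e => hj (by rw [← hxr, show x = F3 from e]; exact hF3r)⟩, hxr⟩
  have hΨ₀max : IsMaxChain (· ≤ ·) Ψ₀ := maxChain_of_ranks h hΨ₀c hΨ₀all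
  obtain ⟨g, hg⟩ := htrans Φ Ψ₀ hΦ hΨ₀max
  set φ : Equiv.Perm α := π g with hφdef
  have hφ : ∀ a b : α, φ a ≤ φ b ↔ a ≤ b := hπaut g
  have hrk : ∀ x : α, rk (φ x) = rk x := orderAut_rk h φ hφ
  have hφB : φ B = B := orderAut_bot φ hφ hBle
  have hfix : ∀ x ∈ Φ, rk x ≠ 3 → φ x = x := by
    intro x hxΦ hx3
    have h1 : φ x ∈ Ψ₀ := by rw [← hg]; exact Set.mem_image_of_mem φ hxΦ
    rcases h1 with he | ⟨hxΦ', -⟩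
    · exact absurd (by rw [← hrk x, he]; exact hHr) hx3
    · exact chain_rk_inj h.rk_strictMono hΦc hxΦ' hxΦ (hrk x)
  have hφF3H : φ F3 = H := by
    have h1 : φ F3 ∈ Ψ₀ := by rw [← hg]; exact Set.mem_image_of_mem φ hF3Φ
    exact chain_rk_inj h.rk_strictMono hΨ₀c h1 (Set.mem_insert _ _)
      (by rw [hrk, hF3r, hHr])
  have hφF2 : φ F2 = F2 := hfix F2 hF2Φ (by omega)
  -- every vertex of F2 is fixed by φ
  have hvfix : ∀ v : α, rk v = 0 → v ≤ F2 → φ v = v := by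
    intro v hv0 hvle
    have hchain : IsChain (· ≤ ·) (insert v {x | x ∈ Φ ∧ F2 ≤ x}) := by
      refine (hΦc.mono (fun x hx => hx.1)).insert ?_
      intro b hb _
      exact Or.inl (hvle.trans hb.2)
    obtain ⟨Ψ, hΨmax, hΨsub⟩ := hchain.exists_maxChain
    have hvΨ : v ∈ Ψ := hΨsub (Set.mem_insert _ _)
    have hF2Ψ : F2 ∈ Ψ := hΨsub (Set.mem_insert_of_mem _ ⟨hF2Φ, le_refl _⟩)
    have key : ∀ A : Set α, Relation.ReflTransGen
        (fun A B => IsMaxChain (· ≤ ·) A ∧ IsMaxChain (· ≤ ·) B ∧ Φ ∩ Ψ ⊆ A ∧ Φ ∩ Ψ ⊆ B ∧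
          ∃ F G, F ∈ A ∧ G ∈ B ∧ F ≠ G ∧ A \ {F} = B \ {G}) Φ A →
        ∀ z ∈ A, rk z ≤ 1 → φ z = z := by
      intro A hA
      induction hA with
      | refl => exact fun z hz hz1 => hfix z hz (by omega)
      | @tail A' A'' hsteps hstep ih =>
        obtain ⟨hA'max, hA''max, hsubA', hsubA'', x, y, hxA', hyA'', hxyne, hdiff⟩ := hstep
        intro z hzA'' hz1
        by_cases hzy : z = y
        case neg =>
          have hz' : z ∈ A'' \ {y} := ⟨hzA'', hzy⟩
          rw [← hdiff] at hz'
          exact ih z hz'.1 hz1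
        subst hzy
        by_cases hyA' : z ∈ A'
        · exact ih z hyA' hz1
        have hrxy : rk x = rk z := by
          obtain ⟨w, hwA'', hwr⟩ := h.flag_rk A'' hA''max (rk x)
            (h.rk_range x).1 (h.rk_range x).2
          have hwy : w = z := by
            by_contra hwy
            have hw' : w ∈ A'' \ {z} := ⟨hwA'', hwy⟩
            rw [← hdiff] at hw'
            exact hw'.2 (chain_rk_inj h.rk_strictMono hA'max.isChain hw'.1 hxA' hwr)
          exact (hwy ▸ hwr).symm
        have hA'c := hA'max.isChain
        have hA''c := hA''max.isChain
        have hF2A' : F2 ∈ A' := hsubA' ⟨hF2Φ, hF2Ψ⟩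
        have hF2A'' : F2 ∈ A'' := hsubA'' ⟨hF2Φ, hF2Ψ⟩
        have hBA' : B ∈ A' := bot_mem_maxChain hBle hA'max
        have hBA'' : B ∈ A'' := bot_mem_maxChain hBle hA''max
        have hcases : rk z = -1 ∨ rk z = 0 ∨ rk z = 1 := by
          have := (h.rk_range z).1; omega
        rcases hcases with hr | hr | hr
        · have : z = B := chain_rk_inj h.rk_strictMono hA''c hyA'' hBA'' (by omega)
          rw [this, hφB]
        · -- vertex changed
          obtain ⟨e, heA'', her⟩ := h.flag_rk A'' hA''max 1 (by omega) (by omega)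
          have heA' : e ∈ A' := by
            have he' : e ∈ A'' \ {z} :=
              ⟨heA'', fun hc => by rw [show e = z from hc] at her; omega⟩
            rw [← hdiff] at he'
            exact he'.1
          have hφe : φ e = e := ih e heA' (by omega)
          have hφx : φ x = x := ih x hxA' (by omega)
          have hBy : B < z := chain_lt h.rk_strictMono hA''c hBA'' hyA'' (by omega)
          have hye : z < e := chain_lt h.rk_strictMono hA''c hyA'' heA'' (by omega)
          have hBx : B < x := chain_lt h.rk_strictMono hA'c hBA' hxA' (by omega)
          have hxe : x < e := chain_lt h.rk_strictMono hA'c hxA' heA' (by omega)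
          obtain ⟨K₁, K₂, hK, hiff⟩ := hpoly0 B e (hBy.trans hye) hBr her
          have hy' := (hiff z).mp ⟨hBy, hye⟩
          have hx' := (hiff x).mp ⟨hBx, hxe⟩
          have hφy' : φ z = K₁ ∨ φ z = K₂ := by
            refine (hiff (φ z)).mp ⟨?_, ?_⟩
            · have := (orderAut_lt φ hφ B z).mpr hBy; rwa [hφB] at this
            · have := (orderAut_lt φ hφ z e).mpr hye; rwa [hφe] at this
          rcases hφy' with h2 | h2 <;> rcases hy' with h1 | h1
          · rw [h2, h1]
          · have hx1 : x = K₁ := by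
              rcases hx' with h3 | h3
              · exact h3
              · exact absurd (h3.trans h1.symm) hxyne
            have hc : φ z = φ x := by rw [h2, hφx, hx1]
            exact absurd (φ.injective hc) (fun e' => hxyne e'.symm)
          · have hx1 : x = K₂ := by
              rcases hx' with h3 | h3
              · exact absurd (h3.trans h1.symm) hxyne
              · exact h3
            have hc : φ z = φ x := by rw [h2, hφx, hx1]
            exact absurd (φ.injective hc) (fun e' => hxyne e'.symm)
          · rw [h2, h1]
        · -- edge changed
          obtain ⟨w, hwA'', hwr⟩ := h.flag_rk A'' hA''max 0 (by omega) (by omega)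
          have hwA' : w ∈ A' := by
            have hw' : w ∈ A'' \ {z} :=
              ⟨hwA'', fun hc => by rw [show w = z from hc] at hwr; omega⟩
            rw [← hdiff] at hw'
            exact hw'.1
          have hφw : φ w = w := ih w hwA' (by omega)
          have hφx : φ x = x := ih x hxA' (by omega)
          have hwy : w < z := chain_lt h.rk_strictMono hA''c hwA'' hyA'' (by omega)
          have hyF2 : z < F2 := chain_lt h.rk_strictMono hA''c hyA'' hF2A'' (by omega)
          have hwx : w < x := chain_lt h.rk_strictMono hA'c hwA' hxA' (by omega)
          have hxF2 : x < F2 := chain_lt h.rk_strictMono hA'c hxA' hF2A' (by omega)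
          obtain ⟨K₁, K₂, hK, hiff⟩ := hpoly1 w F2 (hwy.trans hyF2) hwr hF2r
          have hy' := (hiff z).mp ⟨hwy, hyF2⟩
          have hx' := (hiff x).mp ⟨hwx, hxF2⟩
          have hφy' : φ z = K₁ ∨ φ z = K₂ := by
            refine (hiff (φ z)).mp ⟨?_, ?_⟩
            · have := (orderAut_lt φ hφ w z).mpr hwy; rwa [hφw] at this
            · have := (orderAut_lt φ hφ z F2).mpr hyF2; rwa [hφF2] at this
          rcases hφy' with h2 | h2 <;> rcases hy' with h1 | h1
          · rw [h2, h1]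
          · have hx1 : x = K₁ := by
              rcases hx' with h3 | h3
              · exact h3
              · exact absurd (h3.trans h1.symm) hxyne
            have hc : φ z = φ x := by rw [h2, hφx, hx1]
            exact absurd (φ.injective hc) (fun e' => hxyne e'.symm)
          · have hx1 : x = K₂ := by
              rcases hx' with h3 | h3
              · exact absurd (h3.trans h1.symm) hxyne
              · exact h3
            have hc : φ z = φ x := by rw [h2, hφx, hx1]
            exact absurd (φ.injective hc) (fun e' => hxyne e'.symm)
          · rw [h2, h1]
    exact key Ψ (h.strongly_connected Φ Ψ hΦ hΨmax) v hvΨ (by omega)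
  -- the isometry g fixes all the points of the realized vertex set of F2
  have hgfix : ∀ p ∈ β '' {v : α | rk v = 0 ∧ v ≤ F2},
      ((g : E3 ≃ᵢ E3) : E3 → E3) p = p := by
    rintro p ⟨v, ⟨hv0, hvle⟩, rfl⟩
    have h1 := hcompat g v hv0
    rw [show (π g) v = v from hvfix v hv0 hvle] at h1
    exact h1.symm
  have haff : ∀ x : E3, (g : E3 ≃ᵢ E3) x = x := by
    intro x
    have hcoe : ⇑((g : E3 ≃ᵢ E3).toRealAffineIsometryEquiv.toAffineEquiv.toAffineMap)
        = ((g : E3 ≃ᵢ E3) : E3 → E3) := rfl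
    have := affineMap_fix_of_span_top
      ((g : E3 ≃ᵢ E3).toRealAffineIsometryEquiv.toAffineEquiv.toAffineMap)
      (fun p hp => by rw [hcoe]; exact hgfix p hp) htop' x
    rwa [hcoe] at this
  have hg1 : g = (1 : G) := by
    apply Subtype.ext
    exact IsometryEquiv.ext haff
  have hπg1 : π g = 1 := by rw [hg1]; exact map_one π
  have hφF3 : φ F3 = F3 := by rw [hφdef, hπg1]; rfl
  exact hHne3 (hφF3H.symm.trans hφF3)
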